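/- arXiv:2305.03645 — 3 statements merged into one kernel-verified Lean document; each statement's English description precedes it below -/
import Mathlib

section
/- Let P be a positive stochastic matrix indexed by a finite set A. Then the following are equivalent: (i) P is reversible, i.e., there exists a strictly positive probability vector π with P(i|j)π(j) = P(j|i)π(i) for all i,j ∈ A; (ii) P is transitive, i.e., P(j|i)P(k|j)P(i|k) = P(k|i)P(j|k)P(i|j) for all i,j,k ∈ A. In this case, for any fixed i ∈ A the reversing distribution is given by π(j) = r(j|i)/∑_{k∈A} r(k|i) for all j ∈ A, where r(j|i) = P(j|i)/P(i|j); in particular π is unique. -/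
/-- A (left) stochastic matrix: nonnegative entries, each column sums to 1. -/
def IsStochastic {A : Type*} [Fintype A] (B : Matrix A A ℝ) : Prop :=
  (∀ i j, 0 ≤ B i j) ∧ ∀ j, ∑ i, B i j = 1

/-- Proposition (Kolmogorov criterion): a positive stochastic matrix `P` is reversible
under some strictly positive probability vector `π` if and only if it is transitive
(satisfies the Kolmogorov product rule); in this case, for any fixed `i`, the reversing
distribution is `π(j) = r(j∣i)/∑ₖ r(k∣i)` with `r(j∣i) = P(j∣i)/P(i∣j)`, and hence `π`
is unique. -/
theorem kolmogorov_criterion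
    {A : Type*} [Fintype A] [Nonempty A]
    (P : Matrix A A ℝ) (hst : IsStochastic P) (hpos : ∀ i j : A, 0 < P i j) :
    ((∃ pv : A → ℝ, (∀ i, 0 < pv i) ∧ (∑ i, pv i = 1) ∧
        ∀ i j : A, P i j * pv j = P j i * pv i) ↔
      (∀ i j k : A, P j i * P k j * P i k = P k i * P j k * P i j)) ∧
    (∀ pv : A → ℝ, (∀ i, 0 < pv i) → (∑ i, pv i = 1) →
      (∀ i j : A, P i j * pv j = P j i * pv i) →
      ∀ i j : A, pv j = (P j i / P i j) / ∑ k, P k i / P i k) := by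
  classical
  constructor
  · constructor
    · rintro ⟨pv, hpv, -, hrev⟩ i j k
      have hppos : (0 : ℝ) < pv i * pv j * pv k :=
        mul_pos (mul_pos (hpv i) (hpv j)) (hpv k)
      have key : (P j i * P k j * P i k) * (pv i * pv j * pv k) =
          (P k i * P j k * P i j) * (pv i * pv j * pv k) := by
        calc (P j i * P k j * P i k) * (pv i * pv j * pv k)
            = (P j i * pv i) * (P k j * pv j) * (P i k * pv k) := by ring
          _ = (P i j * pv j) * (P j k * pv k) * (P k i * pv i) := by
              rw [← hrev i j, ← hrev j k, ← hrev k i]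
          _ = (P k i * P j k * P i j) * (pv i * pv j * pv k) := by ring
      exact mul_right_cancel₀ (ne_of_gt hppos) key
    · intro htr
      obtain ⟨i0⟩ := (inferInstance : Nonempty A)
      set S : ℝ := ∑ k, P k i0 / P i0 k with hS
      have hSpos : 0 < S :=
        Finset.sum_pos (fun k _ => div_pos (hpos k i0) (hpos i0 k)) Finset.univ_nonempty
      refine ⟨fun j => (P j i0 / P i0 j) / S, fun j =>
        div_pos (div_pos (hpos j i0) (hpos i0 j)) hSpos, ?_, ?_⟩
      · rw [← Finset.sum_div, div_eq_one_iff_eq (ne_of_gt hSpos)]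
      · intro a b
        have h := htr i0 a b
        have ha := (hpos i0 a).ne'
        have hb := (hpos i0 b).ne'
        field_simp
        nlinarith [h]
  · intro pv hpv hs hrev i j
    have hratio : ∀ k, P k i / P i k = pv k / pv i := by
      intro k
      rw [div_eq_div_iff (hpos i k).ne' (hpv i).ne']
      linarith [hrev i k]
    have hsum : ∑ k, P k i / P i k = 1 / pv i := by
      rw [Finset.sum_congr rfl (fun k _ => hratio k), ← Finset.sum_div, hs]
    rw [hratio j, hsum]
    field_simp
    rw [mul_div_assoc, div_self (hpv i).ne', mul_one]
end

section
/- Let A be a finite set with at least three elements, let ρ be a binary choice probability on A with a binary value representation (s, v, w), and let Q be a nice stochastic matrix indexed by A. Define the transition matrix M by M(i|j) = Q(i|j)·ρ(i|j) for i ≠ j and M(j|j) = 1 − ∑_{k≠j} Q(k|j)·ρ(k|j), and define the probability vector π on A by π(i) = e^{v(i)}/(∑_{j ∈ argmax_A w} e^{v(j)}) if w(i) = max_A w, and π(i) = 0 otherwise. Then M(k|j)π(j) = M(j|k)π(k) for all j,k ∈ A, Mπ = π, π is the unique stationary distribution of M, and there exists ε ∈ (0,1) such that ‖Mⁿμ −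 π‖₁ ≤ 2(1−ε)ⁿ for every probability vector μ on A and every n ≥ 0. -/
open scoped Classical

/-- A binary choice probability on `A`. -/
def IsBCP {A : Type*} (ρ : A → A → ℝ) : Prop :=
  (∀ i j : A, 0 ≤ ρ i j ∧ ρ i j ≤ 1) ∧
  (∀ i j : A, i ≠ j → (ρ i j = 1 ↔ ρ j i = 0)) ∧
  (∃ ε : ℝ, 0 < ε ∧ ∀ i : A, ρ i i = ε)

/-- `(s, v, w)` is a binary value representation of `ρ`. -/
def IsBVRep {A : Type*} (ρ : A → A → ℝ) (s : A → A → ℝ) (v w : A → ℝ) : Prop :=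
  (∀ i j : A, 0 < s i j) ∧ (∀ i j : A, s i j = s j i) ∧
  ∀ i j : A,
    (w j < w i → ρ i j = 1) ∧
    (w i = w j →
      ρ i j = s i j * (Real.exp (v i) / (Real.exp (v i) + Real.exp (v j)))) ∧
    (w i < w j → ρ i j = 0)

lemma sum_mulVec_eq {A : Type*} [Fintype A] [DecidableEq A] (M : Matrix A A ℝ)
    (hcol : ∀ j, ∑ i, M i j = 1) (x : A → ℝ) :
    ∑ i, M.mulVec x i = ∑ j, x j := by
  simp only [Matrix.mulVec, dotProduct]
  rw [Finset.sum_comm]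
  simp only [← Finset.sum_mul, hcol, one_mul]

lemma pow_col_sum {A : Type*} [Fintype A] [DecidableEq A] (M : Matrix A A ℝ)
    (hcol : ∀ j, ∑ i, M i j = 1) (m : ℕ) : ∀ j, ∑ i, (M ^ m) i j = 1 := by
  induction m with
  | zero => intro j; simp [Matrix.one_apply]
  | succ m ihc =>
    intro j
    rw [pow_succ]
    simp only [Matrix.mul_apply]
    rw [Finset.sum_comm]
    simp only [← Finset.sum_mul, ihc, one_mul, hcol]

lemma step_contract {A : Type*} [Fintype A] [DecidableEq A] (M : Matrix A A ℝ)
    (hnn : ∀ i j, 0 ≤ M i j) (hcol : ∀ j, ∑ i, M i j = 1)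
    (i0 : A) (ε : ℝ) (hrow : ∀ j, ε ≤ M i0 j)
    (x : A → ℝ) (hx : ∑ j, x j = 0) :
    ∑ i, |M.mulVec x i| ≤ (1 - ε) * ∑ j, |x j| := by
  set N : Matrix A A ℝ := fun i j => M i j - if i = i0 then ε else 0 with hN
  have hNnn : ∀ i j, 0 ≤ N i j := by
    intro i j
    by_cases h : i = i0
    · subst h; simpa [hN] using hrow j
    · simpa [hN, h] using hnn i j
  have hmv : ∀ i, M.mulVec x i = ∑ j, N i j * x j := by
    intro i
    have : ∑ j, N i j * x j
        = ∑ j, M i j * x j - (if i = i0 then ε else 0) * ∑ j, x j := by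
      rw [Finset.mul_sum, ← Finset.sum_sub_distrib]
      refine Finset.sum_congr rfl fun j _ => ?_
      simp only [hN]; ring
    rw [this, hx, mul_zero, sub_zero]
    rfl
  have hNcol : ∀ j, ∑ i, N i j = 1 - ε := by
    intro j
    simp only [hN]
    rw [Finset.sum_sub_distrib, hcol]
    simp
  calc ∑ i, |M.mulVec x i| ≤ ∑ i, ∑ j, N i j * |x j| := by
        refine Finset.sum_le_sum fun i _ => ?_
        rw [hmv i]
        refine (Finset.abs_sum_le_sum_abs _ _).trans ?_
        refine Finset.sum_le_sum fun j _ => ?_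
        rw [abs_mul, abs_of_nonneg (hNnn i j)]
    _ = ∑ j, (∑ i, N i j) * |x j| := by
        rw [Finset.sum_comm]
        exact Finset.sum_congr rfl fun j _ => (Finset.sum_mul ..).symm
    _ = (1 - ε) * ∑ j, |x j| := by
        rw [Finset.mul_sum]
        exact Finset.sum_congr rfl fun j _ => by rw [hNcol]

lemma iter_contract {A : Type*} [Fintype A] [DecidableEq A] (M : Matrix A A ℝ)
    (hnn : ∀ i j, 0 ≤ M i j) (hcol : ∀ j, ∑ i, M i j = 1)
    (i0 : A) (ε : ℝ) (hε1 : ε ≤ 1) (hrow : ∀ j, ε ≤ M i0 j)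
    (x : A → ℝ) (hx : ∑ j, x j = 0) (m : ℕ) :
    ∑ i, |(M ^ m).mulVec x i| ≤ (1 - ε) ^ m * ∑ j, |x j| := by
  induction m with
  | zero => simp [Matrix.one_mulVec]
  | succ m ih =>
    have hsum : ∑ i, (M ^ m).mulVec x i = 0 := by
      rw [sum_mulVec_eq (M ^ m) (pow_col_sum M hcol m)]; exact hx
    have hstep := step_contract M hnn hcol i0 ε hrow _ hsum
    rw [pow_succ', ← Matrix.mulVec_mulVec]
    calc ∑ i, |M.mulVec ((M ^ m).mulVec x) i|
        ≤ (1 - ε) * ∑ i, |(M ^ m).mulVec x i| := hstep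
      _ ≤ (1 - ε) * ((1 - ε) ^ m * ∑ j, |x j|) := by
          apply mul_le_mul_of_nonneg_left ih (by linarith)
      _ = (1 - ε) ^ (m + 1) * ∑ j, |x j| := by ring

/-- Theorem (ergodic value analysis of the Neural Metropolis Algorithm): for a
value-based algorithm with nice exploration matrix `Q`, the softmax-over-argmax
distribution `π` satisfies detailed balance with respect to the transition matrix `M`,
is the unique stationary distribution of `M`, and the laws `Mⁿμ` converge to `π`
geometrically in total variation, uniformly over initial distributions `μ`. -/
theorem nma_value_based_limit
    {A : Type*} [Fintype A] [DecidableEq A] (hcard : 3 ≤ Fintype.card A)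
    (ρ : A → A → ℝ) (hρ : IsBCP ρ)
    (s : A → A → ℝ) (v w : A → ℝ) (hrep : IsBVRep ρ s v w)
    (Q : Matrix A A ℝ) (hQ : IsStochastic Q) (hQsymm : Q.IsSymm)
    (hQpos : ∀ i j : A, i ≠ j → 0 < Q i j)
    (M : Matrix A A ℝ)
    (hMoff : ∀ i j : A, i ≠ j → M i j = Q i j * ρ i j)
    (hMdiag : ∀ j : A, M j j = 1 - ∑ k ∈ Finset.univ.erase j, Q k j * ρ k j)
    (pv : A → ℝ)
    (hpv : ∀ i : A, pv i =
      if ∀ j : A, w j ≤ w i then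
        Real.exp (v i) /
          ∑ j ∈ Finset.univ.filter fun j : A => ∀ k : A, w k ≤ w j, Real.exp (v j)
      else 0) :
    (∀ j k : A, M k j * pv j = M j k * pv k) ∧
    M.mulVec pv = pv ∧
    (∀ i, 0 ≤ pv i) ∧ (∑ i, pv i = 1) ∧
    (∀ pv' : A → ℝ, (∀ i, 0 ≤ pv' i) → (∑ i, pv' i = 1) →
      M.mulVec pv' = pv' → pv' = pv) ∧
    ∃ ε : ℝ, ε ∈ Set.Ioo (0 : ℝ) 1 ∧
      ∀ μ : A → ℝ, (∀ i, 0 ≤ μ i) → (∑ i, μ i = 1) →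
        ∀ m : ℕ, ∑ i, |((M ^ m).mulVec μ) i - pv i| ≤ 2 * (1 - ε) ^ m := by
  obtain ⟨hρ01, hρiff, -⟩ := hρ
  obtain ⟨hs, hssym, hval⟩ := hrep
  obtain ⟨hQnn, hQcol⟩ := hQ
  haveI hAne : Nonempty A := Fintype.card_pos_iff.mp (by omega)
  -- an argmax element
  obtain ⟨i0, -, hi0u⟩ := Finset.exists_max_image Finset.univ w Finset.univ_nonempty
  have hi0 : ∀ k, w k ≤ w i0 := fun k => hi0u k (Finset.mem_univ k)
  set Top : Finset A := Finset.univ.filter (fun j : A => ∀ k, w k ≤ w j) with hTopdef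
  set S : ℝ := ∑ j ∈ Top, Real.exp (v j) with hSdef
  have hi0Top : i0 ∈ Top := by simp [hTopdef, hi0]
  have hS : 0 < S := Finset.sum_pos (fun j _ => Real.exp_pos _) ⟨i0, hi0Top⟩
  -- nonnegativity and sum 1 of pv
  have hpvnn : ∀ i, 0 ≤ pv i := by
    intro i; rw [hpv i]
    split
    · positivity
    · exact le_refl 0
  have hpvsum : ∑ i, pv i = 1 := by
    have h1 : ∑ i, pv i = ∑ i ∈ Top, Real.exp (v i) / S := by
      rw [Finset.sum_filter]
      exact Finset.sum_congr rfl fun i _ => hpv i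
    rw [h1, ← Finset.sum_div, ← hSdef, div_self (ne_of_gt hS)]
  -- M is stochastic
  have hQerase : ∀ j, ∑ k ∈ Finset.univ.erase j, Q k j = 1 - Q j j := by
    intro j
    have := Finset.sum_erase_add Finset.univ (fun k => Q k j) (Finset.mem_univ j)
    rw [hQcol j] at this
    linarith
  have hMnn : ∀ i j, 0 ≤ M i j := by
    intro i j
    by_cases h : i = j
    · subst h
      rw [hMdiag i]
      have h1 : ∑ k ∈ Finset.univ.erase i, Q k i * ρ k i
          ≤ ∑ k ∈ Finset.univ.erase i, Q k i :=
        Finset.sum_le_sum fun k _ => mul_le_of_le_one_right (hQnn k i) (hρ01 k i).2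
      have h2 := hQerase i
      have h3 := hQnn i i
      linarith
    · rw [hMoff i j h]
      exact mul_nonneg (hQnn i j) (hρ01 i j).1
  have hMcol : ∀ j, ∑ i, M i j = 1 := by
    intro j
    rw [← Finset.sum_erase_add Finset.univ _ (Finset.mem_univ j), hMdiag j]
    have : ∑ i ∈ Finset.univ.erase j, M i j
        = ∑ i ∈ Finset.univ.erase j, Q i j * ρ i j :=
      Finset.sum_congr rfl fun i hi => hMoff i j (Finset.ne_of_mem_erase hi)
    rw [this]; ring
  -- detailed balance
  have hdb : ∀ j k : A, M k j * pv j = M j k * pv k := by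
    intro j k
    by_cases hjk : j = k
    · subst hjk; rfl
    by_cases hj : ∀ l, w l ≤ w j <;> by_cases hk : ∀ l, w l ≤ w k
    · have hwjk : w j = w k := le_antisymm (hk j) (hj k)
      rw [hMoff k j (Ne.symm hjk), hMoff j k hjk, (hval k j).2.1 hwjk.symm,
        (hval j k).2.1 hwjk, hpv j, hpv k, if_pos hj, if_pos hk,
        hQsymm.apply k j, hssym k j, add_comm (Real.exp (v k)) (Real.exp (v j))]
      ring
    · obtain ⟨l, hl⟩ := not_forall.mp hk
      have hwkj : w k < w j := lt_of_lt_of_le (lt_of_not_ge hl) (hj l)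
      rw [hpv k, if_neg hk, mul_zero, hMoff k j (Ne.symm hjk),
        (hval k j).2.2 hwkj]
      ring
    · obtain ⟨l, hl⟩ := not_forall.mp hj
      have hwjk : w j < w k := lt_of_lt_of_le (lt_of_not_ge hl) (hk l)
      rw [hpv j, if_neg hj, mul_zero, hMoff j k hjk, (hval j k).2.2 hwjk]
      ring
    · rw [hpv j, if_neg hj, hpv k, if_neg hk]
      ring
  -- stationarity
  have hstat : M.mulVec pv = pv := by
    funext i
    simp only [Matrix.mulVec, dotProduct]
    calc ∑ j, M i j * pv j = ∑ j, M j i * pv i :=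
          Finset.sum_congr rfl fun j _ => hdb j i
      _ = (∑ j, M j i) * pv i := by rw [Finset.sum_mul]
      _ = pv i := by rw [hMcol i, one_mul]
  -- positivity of row i0
  have hrowpos : ∀ j, 0 < M i0 j := by
    intro j
    by_cases h : j = i0
    · rw [h, hMdiag i0]
      have hne : (Finset.univ.erase i0).Nonempty := by
        obtain ⟨b, hb⟩ := Fintype.exists_ne_of_one_lt_card (by omega) i0
        exact ⟨b, Finset.mem_erase.mpr ⟨hb, Finset.mem_univ b⟩⟩
      have hlt : ∑ k ∈ Finset.univ.erase i0, Q k i0 * ρ k i0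
          < ∑ k ∈ Finset.univ.erase i0, Q k i0 := by
        refine Finset.sum_lt_sum_of_nonempty hne fun k hk => ?_
        have hkne : k ≠ i0 := Finset.ne_of_mem_erase hk
        have hρk1 : ρ k i0 < 1 := by
          rcases lt_or_eq_of_le (hi0 k) with hwlt | hweq
          · rw [(hval k i0).2.2 hwlt]; norm_num
          · rcases lt_or_eq_of_le (hρ01 k i0).2 with h1 | h1
            · exact h1
            · exfalso
              have h0 := (hρiff k i0 hkne).mp h1
              have hpos : 0 < ρ i0 k := by
                rw [(hval i0 k).2.1 hweq.symm]
                exact mul_pos (hs i0 k)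
                  (div_pos (Real.exp_pos _) (by positivity))
              rw [h0] at hpos; exact lt_irrefl 0 hpos
        calc Q k i0 * ρ k i0 < Q k i0 * 1 :=
              mul_lt_mul_of_pos_left hρk1 (hQpos k i0 hkne)
          _ = Q k i0 := mul_one _
      have h2 := hQerase i0
      have h3 := hQnn i0 i0
      linarith
    · rw [hMoff i0 j (Ne.symm h)]
      refine mul_pos (hQpos i0 j (Ne.symm h)) ?_
      rcases lt_or_eq_of_le (hi0 j) with hwlt | hweq
      · rw [(hval i0 j).1 hwlt]; norm_num
      · rw [(hval i0 j).2.1 hweq.symm]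
        exact mul_pos (hs i0 j) (div_pos (Real.exp_pos _) (by positivity))
  -- the contraction constant
  set ε : ℝ := min (Finset.univ.inf' Finset.univ_nonempty (fun j => M i0 j)) (1 / 2)
    with hεdef
  have hεpos : 0 < ε := by
    refine lt_min ?_ (by norm_num)
    exact Finset.lt_inf'_iff _ |>.mpr fun j _ => hrowpos j
  have hεlt1 : ε < 1 := lt_of_le_of_lt (min_le_right _ _) (by norm_num)
  have hε1 : ε ≤ 1 := hεlt1.le
  have hεrow : ∀ j, ε ≤ M i0 j := fun j =>
    le_trans (min_le_left _ _) (Finset.inf'_le _ (Finset.mem_univ j))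
  -- uniqueness
  have huniq : ∀ pv' : A → ℝ, (∀ i, 0 ≤ pv' i) → (∑ i, pv' i = 1) →
      M.mulVec pv' = pv' → pv' = pv := by
    intro pv' hnn' hsum' hstat'
    have hxsum : ∑ i, (pv' - pv) i = 0 := by
      simp only [Pi.sub_apply, Finset.sum_sub_distrib, hsum', hpvsum, sub_self]
    have hMx : M.mulVec (pv' - pv) = pv' - pv := by
      rw [Matrix.mulVec_sub, hstat', hstat]
    have hc := step_contract M hMnn hMcol i0 ε hεrow (pv' - pv) hxsum
    rw [hMx] at hc
    have hsnn : 0 ≤ ∑ i, |(pv' - pv) i| :=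
      Finset.sum_nonneg fun i _ => abs_nonneg _
    have hzero : ∑ i, |(pv' - pv) i| = 0 := by nlinarith
    funext i
    have := (Finset.sum_eq_zero_iff_of_nonneg
      (fun i _ => abs_nonneg ((pv' - pv) i))).mp hzero i (Finset.mem_univ i)
    have := abs_eq_zero.mp this
    have : pv' i - pv i = 0 := this
    linarith
  -- fixed point of powers
  have hpvfix : ∀ m : ℕ, (M ^ m).mulVec pv = pv := by
    intro m
    induction m with
    | zero => simp [Matrix.one_mulVec]
    | succ m ih => rw [pow_succ', ← Matrix.mulVec_mulVec, ih, hstat]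
  refine ⟨hdb, hstat, hpvnn, hpvsum, huniq, ε, ⟨hεpos, hεlt1⟩, ?_⟩
  intro μ hμnn hμsum m
  have hxsum : ∑ i, (μ - pv) i = 0 := by
    simp only [Pi.sub_apply, Finset.sum_sub_distrib, hμsum, hpvsum, sub_self]
  have key := iter_contract M hMnn hMcol i0 ε hε1 hεrow (μ - pv) hxsum m
  have heq : ∀ i, ((M ^ m).mulVec μ) i - pv i = ((M ^ m).mulVec (μ - pv)) i := by
    intro i
    rw [Matrix.mulVec_sub, hpvfix m]
    rfl
  have hbd : ∑ j, |(μ - pv) j| ≤ 2 := by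
    have : ∀ j, |(μ - pv) j| ≤ μ j + pv j := by
      intro j
      have := abs_sub (μ j) (pv j)
      rw [abs_of_nonneg (hμnn j), abs_of_nonneg (hpvnn j)] at this
      simpa [Pi.sub_apply] using this
    calc ∑ j, |(μ - pv) j| ≤ ∑ j, (μ j + pv j) :=
          Finset.sum_le_sum fun j _ => this j
      _ = 2 := by rw [Finset.sum_add_distrib, hμsum, hpvsum]; norm_num
  calc ∑ i, |((M ^ m).mulVec μ) i - pv i|
      = ∑ i, |((M ^ m).mulVec (μ - pv)) i| := by
        exact Finset.sum_congr rfl fun i _ => by rw [heq i]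
    _ ≤ (1 - ε) ^ m * ∑ j, |(μ - pv) j| := key
    _ ≤ (1 - ε) ^ m * 2 := by
        apply mul_le_mul_of_nonneg_left hbd (pow_nonneg (by linarith) m)
    _ = 2 * (1 - ε) ^ m := by ring
end

section
/- Let A be a finite set with at least three elements, let ρ be a positive binary choice probability on A, and let Q be a nice stochastic matrix indexed by A. Define the transition matrix M by M(i|j) = Q(i|j)·ρ(i|j) for i ≠ j and M(j|j) = 1 − ∑_{k≠j} Q(k|j)·ρ(k|j). Then M is reversible (i.e., there exists a strictly positive probability vector π with M(i|j)π(j) = M(j|i)π(i) for all i,j) if and only if ρ is transitive. -/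
/-- Transitivity of a binary choice probability. -/
def BCPTransitive {A : Type*} (ρ : A → A → ℝ) : Prop :=
  ∀ i j k : A, i ≠ j → j ≠ k → i ≠ k →
    ρ j i * ρ k j * ρ i k = ρ k i * ρ j k * ρ i j

/-- Theorem (value-based ⟺ reversible): for a Neural Metropolis Algorithm with
positive binary choice probability `ρ` and nice exploration matrix `Q`, the transition
matrix `M` is reversible if and only if `ρ` is transitive. -/
theorem nma_reversible_iff_transitive
    {A : Type*} [Fintype A] [DecidableEq A] (hcard : 3 ≤ Fintype.card A)
    (ρ : A → A → ℝ) (hρ : IsBCP ρ) (hpos : ∀ i j : A, i ≠ j → 0 < ρ i j)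
    (Q : Matrix A A ℝ) (hQ : IsStochastic Q) (hQsymm : Q.IsSymm)
    (hQpos : ∀ i j : A, i ≠ j → 0 < Q i j)
    (M : Matrix A A ℝ)
    (hMoff : ∀ i j : A, i ≠ j → M i j = Q i j * ρ i j)
    (hMdiag : ∀ j : A, M j j = 1 - ∑ k ∈ Finset.univ.erase j, Q k j * ρ k j) :
    (∃ pv : A → ℝ, (∀ i, 0 < pv i) ∧ (∑ i, pv i = 1) ∧
        ∀ i j : A, M i j * pv j = M j i * pv i) ↔
      BCPTransitive ρ := by
  obtain ⟨a⟩ : Nonempty A := Fintype.card_pos_iff.mp (by omega)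
  constructor
  · rintro ⟨pv, hpv, _, hbal⟩ i j k hij hjk hik
    have key : ∀ x y : A, x ≠ y → ρ x y * pv y = ρ y x * pv x := by
      intro x y hxy
      have h := hbal x y
      rw [hMoff x y hxy, hMoff y x hxy.symm] at h
      have hQxy : Q y x = Q x y := hQsymm.apply x y
      rw [hQxy] at h
      have hQne : Q x y ≠ 0 := (hQpos x y hxy).ne'
      have : Q x y * (ρ x y * pv y) = Q x y * (ρ y x * pv x) := by ring_nf; ring_nf at h; linarith
      exact mul_left_cancel₀ hQne this
    have e1 := key j i hij.symm
    have e2 := key k j hjk.symm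
    have e3 := key i k hik
    have hP : pv i * pv j * pv k ≠ 0 := by
      have := hpv i; have := hpv j; have := hpv k; positivity
    have hm : (ρ j i * pv i) * ((ρ k j * pv j) * (ρ i k * pv k))
        = (ρ i j * pv j) * ((ρ j k * pv k) * (ρ k i * pv i)) := by rw [e1, e2, e3]
    have : (ρ j i * ρ k j * ρ i k) * (pv i * pv j * pv k)
        = (ρ k i * ρ j k * ρ i j) * (pv i * pv j * pv k) := by linear_combination hm
    exact mul_right_cancel₀ hP this
  · intro htrans
    set w : A → ℝ := fun i => if i = a then 1 else ρ i a / ρ a i with hw_def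
    have hw : ∀ i, 0 < w i := by
      intro i
      by_cases h : i = a
      · simp [hw_def, h]
      · simp only [hw_def, h, if_false]
        exact div_pos (hpos i a h) (hpos a i (Ne.symm h))
    set S := ∑ i, w i with hS_def
    have hS : 0 < S := Finset.sum_pos (fun i _ => hw i) ⟨a, Finset.mem_univ a⟩
    have key : ∀ i j : A, i ≠ j → ρ i j * w j = ρ j i * w i := by
      intro i j hij
      by_cases hja : j = a
      · subst hja
        have hne : ρ j i ≠ 0 := (hpos j i hij.symm).ne'
        simp only [hw_def, if_pos rfl, if_neg hij]
        field_simp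
      · by_cases hia : i = a
        · subst hia
          have hne : ρ i j ≠ 0 := (hpos i j hij).ne'
          simp only [hw_def, if_pos rfl, if_neg hja]
          field_simp
        · simp only [hw_def, if_neg hja, if_neg hia]
          have ht := htrans a j i (fun h => hja h.symm) (fun h => hij h.symm)
            (fun h => hia h.symm)
          have h1 : ρ a j ≠ 0 := (hpos a j (fun h => hja h.symm)).ne'
          have h2 : ρ a i ≠ 0 := (hpos a i (fun h => hia h.symm)).ne'
          field_simp
          linear_combination ht
    refine ⟨fun i => w i / S, fun i => div_pos (hw i) hS, ?_, ?_⟩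
    · rw [← Finset.sum_div]; field_simp; exact hS_def.symm
    · intro i j
      by_cases hij : i = j
      · subst hij; rfl
      · rw [hMoff i j hij, hMoff j i (Ne.symm hij)]
        have hQxy : Q j i = Q i j := hQsymm.apply i j
        have hk := key i j hij
        rw [hQxy]
        field_simp
        linear_combination Q i j * hk
end
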